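/- (Theorem 1, full recursive form.) Fix ε > 0 and a sequence of vectors g₁, g₂, … ∈ ℝ^n. Define G_t = εI + Σ_{τ=1}^{t} g_τ g_τᵀ, and define matrices L_t recursively by L₀ = √ε · I and L_{t+1} = L_t (I + α(ḡ_{t+1}) ḡ_{t+1} ḡ_{t+1}ᵀ) where ḡ_{t+1} = L_t^{-1} g_{t+1}. Then for every t ≥ 0: L_t is invertible, L_t L_tᵀ = G_t, and the preconditioned gradient satisfies L_{t+1}^{-1} g_{t+1} = (1 + ‖L_t^{-1} g_{t+1}‖²)^{-1/2} · L_t^{-1} g_{t+1}. -/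

import Mathlib

open Matrix Finset

/-- The Euclidean norm of a vector in ℝ^n. -/
noncomputable def euclNorm {n : ℕ} (v : Fin n → ℝ) : ℝ :=
  Real.sqrt (∑ i, v i ^ 2)

/-- `α(v) = (√(1 + ‖v‖²) − 1)/‖v‖²` (equal to `0` when `v = 0`). -/
noncomputable def alphaF {n : ℕ} (v : Fin n → ℝ) : ℝ :=
  (Real.sqrt (1 + euclNorm v ^ 2) - 1) / euclNorm v ^ 2

/-- The rank-one outer product `u wᵀ`. -/
def outer {n : ℕ} (u w : Fin n → ℝ) : Matrix (Fin n) (Fin n) ℝ :=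
  Matrix.of fun i j => u i * w j

variable {n : ℕ}

lemma euclNorm_sq (v : Fin n → ℝ) : euclNorm v ^ 2 = ∑ i, v i ^ 2 := by
  rw [euclNorm, Real.sq_sqrt (Finset.sum_nonneg fun i _ => sq_nonneg _)]

lemma outer_transpose (v : Fin n → ℝ) : (outer v v)ᵀ = outer v v := by
  ext i j; simp [outer, Matrix.transpose_apply, mul_comm]

lemma outer_mul_outer (v : Fin n → ℝ) :
    outer v v * outer v v = (∑ i, v i ^ 2) • outer v v := by
  ext i j
  have h : ∀ k, (v i * v k) * (v k * v j) = (v k ^ 2) * (v i * v j) := fun k => by ring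
  simp [Matrix.mul_apply, outer, h, ← Finset.sum_mul]

lemma mul_outer (A : Matrix (Fin n) (Fin n) ℝ) (v w : Fin n → ℝ) :
    A * outer v w = outer (A.mulVec v) w := by
  ext i j
  simp [Matrix.mul_apply, outer, Matrix.mulVec, dotProduct, Finset.sum_mul]
  congr 1; ext k; ring

lemma outer_mul_transpose (A : Matrix (Fin n) (Fin n) ℝ) (v w : Fin n → ℝ) :
    outer v w * Aᵀ = outer v (A.mulVec w) := by
  ext i j
  simp [Matrix.mul_apply, outer, Matrix.mulVec, dotProduct, Finset.mul_sum]
  congr 1; ext k; ring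

lemma outer_mulVec_self (v : Fin n → ℝ) :
    (outer v v).mulVec v = (∑ i, v i ^ 2) • v := by
  ext i
  have h : ∀ k, (v i * v k) * v k = v k ^ 2 * v i := fun k => by ring
  simp [Matrix.mulVec, dotProduct, outer, h, ← Finset.sum_mul]

lemma outer_eq_zero (v : Fin n → ℝ) (h : ∑ i, v i ^ 2 = 0) : outer v v = 0 := by
  have hv : ∀ i, v i = 0 := by
    intro i
    have := (Finset.sum_eq_zero_iff_of_nonneg (fun i _ => sq_nonneg (v i))).mp h i (Finset.mem_univ i)
    exact pow_eq_zero_iff (by norm_num) |>.mp this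
  ext i j; simp [outer, hv]

lemma M_props (v : Fin n → ℝ) :
    IsUnit ((1 : Matrix (Fin n) (Fin n) ℝ) + alphaF v • outer v v).det ∧
    ((1 : Matrix (Fin n) (Fin n) ℝ) + alphaF v • outer v v) *
      ((1 : Matrix (Fin n) (Fin n) ℝ) + alphaF v • outer v v)ᵀ = 1 + outer v v ∧
    ((1 : Matrix (Fin n) (Fin n) ℝ) + alphaF v • outer v v).mulVec v =
      Real.sqrt (1 + euclNorm v ^ 2) • v := by
  set s := ∑ i, v i ^ 2 with hs_def
  have hs0 : (0:ℝ) ≤ s := Finset.sum_nonneg fun i _ => sq_nonneg _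
  have hE : euclNorm v ^ 2 = s := euclNorm_sq v
  set β := Real.sqrt (1 + s) with hβ_def
  have hβpos : 0 < β := Real.sqrt_pos.mpr (by linarith)
  have hβ2 : β ^ 2 = 1 + s := Real.sq_sqrt (by linarith)
  set a := alphaF v with ha_def
  have ha : a = (β - 1) / s := by rw [ha_def, alphaF, hE]
  have key1 : 1 + a * s = β := by
    rcases eq_or_ne s 0 with h | h
    · simp [ha, h, hβ_def]
    · rw [ha, div_mul_cancel₀ _ h]; ring
  set O := outer v v with hO_def
  have hOT : Oᵀ = O := outer_transpose v
  have hOO : O * O = s • O := outer_mul_outer v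
  have hOv : O.mulVec v = s • v := outer_mulVec_self v
  set M : Matrix (Fin n) (Fin n) ℝ := 1 + a • O with hM_def
  have hMT : Mᵀ = M := by rw [hM_def, Matrix.transpose_add, Matrix.transpose_one, Matrix.transpose_smul, hOT]
  have hMsq : M * M = 1 + O := by
    have expand : M * M = 1 + (2 * a + a ^ 2 * s) • O := by
      rw [hM_def]
      simp only [add_mul, mul_add, one_mul, mul_one, Matrix.smul_mul, Matrix.mul_smul, hOO]
      module
    rw [expand]
    rcases eq_or_ne s 0 with h | h
    · have : O = 0 := outer_eq_zero v (by rw [← hs_def]; exact h)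
      simp [this]
    · have hc : 2 * a + a ^ 2 * s = 1 := by
        rw [ha]
        field_simp
        nlinarith [hβ2]
      rw [hc, one_smul]
  have hMv : M.mulVec v = β • v := by
    rw [hM_def, Matrix.add_mulVec, Matrix.one_mulVec, Matrix.smul_mulVec, hOv, ← key1]
    module
  -- inverse
  set b : ℝ := -(a / β) with hb_def
  have hMN : M * (1 + b • O) = 1 := by
    have expand : M * (1 + b • O) = 1 + (a + b * (1 + a * s)) • O := by
      rw [hM_def]
      simp only [add_mul, mul_add, one_mul, mul_one, Matrix.smul_mul, Matrix.mul_smul, hOO]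
      module
    have hz : a + b * (1 + a * s) = 0 := by
      rw [key1, hb_def]
      field_simp
      ring
    rw [expand, hz]
    simp
  have hMunit : IsUnit M.det := Matrix.isUnit_det_of_right_inverse hMN
  refine ⟨hMunit, by rw [hMT]; exact hMsq, ?_⟩
  rw [hMv, hE]


/-- Theorem 1, full recursive form.  Here `g t` plays the role of
`g_{t+1}`, so `G_t = εI + ∑_{τ < t} g_τ g_τᵀ`, `L₀ = √ε · I` and
`L_{t+1} = L_t (I + α(ḡ) ḡ ḡᵀ)` with `ḡ = L_t⁻¹ g_t`.  Then for every `t`: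
`L_t` is invertible, `L_t L_tᵀ = G_t`, and
`L_{t+1}⁻¹ g_t = (1 + ‖L_t⁻¹ g_t‖²)^{-1/2} · L_t⁻¹ g_t`. -/
theorem adagram_recursive_cholesky {n : ℕ} (ε : ℝ) (hε : 0 < ε)
    (g : ℕ → Fin n → ℝ) (L : ℕ → Matrix (Fin n) (Fin n) ℝ)
    (hL0 : L 0 = Real.sqrt ε • (1 : Matrix (Fin n) (Fin n) ℝ))
    (hLrec : ∀ t : ℕ, L (t + 1) =
      L t * ((1 : Matrix (Fin n) (Fin n) ℝ) +
        alphaF ((L t)⁻¹.mulVec (g t)) •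
          outer ((L t)⁻¹.mulVec (g t)) ((L t)⁻¹.mulVec (g t)))) :
    ∀ t : ℕ,
      IsUnit (L t).det ∧
      L t * (L t)ᵀ =
        ε • (1 : Matrix (Fin n) (Fin n) ℝ) + ∑ τ ∈ Finset.range t, outer (g τ) (g τ) ∧
      (L (t + 1))⁻¹.mulVec (g t) =
        (Real.sqrt (1 + euclNorm ((L t)⁻¹.mulVec (g t)) ^ 2))⁻¹ • (L t)⁻¹.mulVec (g t) := by
  have hεs : Real.sqrt ε ≠ 0 := ne_of_gt (Real.sqrt_pos.mpr hε)
  have main : ∀ t, IsUnit (L t).det ∧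
      L t * (L t)ᵀ =
        ε • (1 : Matrix (Fin n) (Fin n) ℝ) + ∑ τ ∈ Finset.range t, outer (g τ) (g τ) := by
    intro t
    induction t with
    | zero =>
      constructor
      · rw [hL0, Matrix.det_smul, Matrix.det_one, mul_one]
        exact IsUnit.pow _ (Ne.isUnit hεs)
      · rw [hL0]
        simp [Matrix.transpose_smul, Matrix.smul_mul, Matrix.mul_smul, smul_smul,
          Real.mul_self_sqrt hε.le]
    | succ t ih =>
      obtain ⟨hdet, hG⟩ := ih
      set v := (L t)⁻¹.mulVec (g t) with hv_def
      obtain ⟨hMdet, hMMT, hMv⟩ := M_props v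
      set M : Matrix (Fin n) (Fin n) ℝ := 1 + alphaF v • outer v v with hM_def
      have hLv : (L t).mulVec v = g t := by
        rw [hv_def, Matrix.mulVec_mulVec, Matrix.mul_nonsing_inv _ hdet, Matrix.one_mulVec]
      constructor
      · rw [hLrec t, Matrix.det_mul]
        exact hdet.mul hMdet
      · rw [hLrec t, Matrix.transpose_mul]
        calc L t * M * (Mᵀ * (L t)ᵀ) = L t * (M * Mᵀ) * (L t)ᵀ := by
              noncomm_ring
          _ = L t * (1 + outer v v) * (L t)ᵀ := by rw [hMMT]
          _ = L t * (L t)ᵀ + L t * outer v v * (L t)ᵀ := by noncomm_ring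
          _ = _ := by
              rw [hG, mul_outer, outer_mul_transpose, hLv, Finset.sum_range_succ]
              abel
  intro t
  obtain ⟨hdet, hG⟩ := main t
  refine ⟨hdet, hG, ?_⟩
  set v := (L t)⁻¹.mulVec (g t) with hv_def
  obtain ⟨hMdet, hMMT, hMv⟩ := M_props v
  set M : Matrix (Fin n) (Fin n) ℝ := 1 + alphaF v • outer v v with hM_def
  set β := Real.sqrt (1 + euclNorm v ^ 2) with hβ_def
  have hβpos : 0 < β := Real.sqrt_pos.mpr (by
    have := euclNorm_sq v
    nlinarith [Finset.sum_nonneg fun i (_ : i ∈ Finset.univ) => sq_nonneg (v i)])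
  have hinv : (L (t + 1))⁻¹ = M⁻¹ * (L t)⁻¹ := by
    rw [hLrec t, Matrix.mul_inv_rev]
  have hMiv : M⁻¹.mulVec v = β⁻¹ • v := by
    have h1 : M⁻¹.mulVec (M.mulVec v) = v := by
      rw [Matrix.mulVec_mulVec, Matrix.nonsing_inv_mul _ hMdet, Matrix.one_mulVec]
    rw [hMv, Matrix.mulVec_smul] at h1
    rw [eq_comm, inv_smul_eq_iff₀ (ne_of_gt hβpos)]
    exact h1.symm
  rw [hinv, ← Matrix.mulVec_mulVec, ← hv_def, hMiv]
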